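/- arXiv:2602.22842 — 4 statements merged into one kernel-verified Lean document; each statement's English description precedes it below -/
import Mathlib

section
/- Let n ≥ 1 be an integer, let a < b be real numbers, and suppose the real parameters θ = (c, δ_0, …, δ_{n-2}) satisfy α_j^a = w_j^a and α_j^b = w_j^b for all j = 0, …, n-1. Then for every f : ℝ → ℝ that is n-times continuously differentiable on [a,b], the Hermite quadrature error admits the exact representation ∫_a^b f(x) dx = Σ_{j=0}^{n-1} w_j^a f^{(j)}(a) + Σ_{j=0}^{n-1} w_j^b f^{(j)}(b) + ∫_a^b (-1)^n f^{(n)}(x) P(x,θ) dx, which requires only the n-th (rather than the 2n-th) derivative of f. -/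
open Finset intervalIntegral

/-- Hermite quadrature weight at `a`:
`w_j^a = (b-a)^(j+1) * n * Σ_{k=j}^{n-1} C(k,j) (n+k-j-1)!/(n+k+1)!`. -/
noncomputable def wA (n : ℕ) (a b : ℝ) (j : ℕ) : ℝ :=
  (b - a) ^ (j + 1) * n * ∑ k ∈ Finset.Icc j (n - 1),
    (k.choose j : ℝ) * (Nat.factorial (n + k - j - 1)) / (Nat.factorial (n + k + 1))

/-- Hermite quadrature weight at `b`: `w_j^b = (-1)^j w_j^a`. -/
noncomputable def wB (n : ℕ) (a b : ℝ) (j : ℕ) : ℝ := (-1 : ℝ) ^ j * wA n a b j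

/-- RIBP weight at `a`:
`α_j^a = (-1)^(j+1) [ (a+c)^(j+1)/(j+1)! + Σ_{i=0}^{j-1} δ_{i+n-1-j} a^i/i! ]`. -/
noncomputable def alphaA (n : ℕ) (a c : ℝ) (δ : ℕ → ℝ) (j : ℕ) : ℝ :=
  (-1 : ℝ) ^ (j + 1) * ((a + c) ^ (j + 1) / (Nat.factorial (j + 1)) +
    ∑ i ∈ Finset.range j, δ (i + n - 1 - j) * a ^ i / (Nat.factorial i))

/-- RIBP weight at `b`:
`α_j^b = (-1)^j [ (b+c)^(j+1)/(j+1)! + Σ_{i=0}^{j-1} δ_{i+n-1-j} b^i/i! ]`. -/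
noncomputable def alphaB (n : ℕ) (b c : ℝ) (δ : ℕ → ℝ) (j : ℕ) : ℝ :=
  (-1 : ℝ) ^ j * ((b + c) ^ (j + 1) / (Nat.factorial (j + 1)) +
    ∑ i ∈ Finset.range j, δ (i + n - 1 - j) * b ^ i / (Nat.factorial i))

/-- Polynomial kernel `P(x,θ) = (x+c)^n/n! + Σ_{i=0}^{n-2} δ_i x^i/i!`. -/
noncomputable def Pker (n : ℕ) (c : ℝ) (δ : ℕ → ℝ) (x : ℝ) : ℝ :=
  (x + c) ^ n / (Nat.factorial n) + ∑ i ∈ Finset.range (n - 1), δ i * x ^ i / (Nat.factorial i)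

/-- `Sker n c δ m` is the `(n-m)`-th derivative of the kernel `Pker`. -/
noncomputable def Sker (n : ℕ) (c : ℝ) (δ : ℕ → ℝ) : ℕ → ℝ → ℝ
  | 0 => fun _ => 1
  | (j+1) => fun x => (x + c) ^ (j + 1) / (Nat.factorial (j + 1)) +
      ∑ i ∈ Finset.range j, δ (i + n - 1 - j) * x ^ i / (Nat.factorial i)

lemma Sker_continuous (n : ℕ) (c : ℝ) (δ : ℕ → ℝ) (m : ℕ) : Continuous (Sker n c δ m) := by
  cases m with
  | zero => exact continuous_const
  | succ j =>
    simp only [Sker]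
    apply Continuous.add
    · exact ((continuous_id.add continuous_const).pow _).div_const _
    · exact continuous_finset_sum _ fun i _ => (continuous_const.mul (continuous_pow i)).div_const _

lemma Sker_hasDerivAt (n : ℕ) (c : ℝ) (δ : ℕ → ℝ) (m : ℕ) (hm : m + 1 ≤ n) (x : ℝ) :
    HasDerivAt (Sker n c δ (m + 1)) (Sker n c δ m x) x := by
  cases m with
  | zero =>
    simp only [Sker, Finset.range_zero, Finset.sum_empty, add_zero, pow_one, Nat.factorial_one,
      Nat.cast_one, div_one]
    simpa using (hasDerivAt_id x).add_const c
  | succ j =>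
    simp only [Sker]
    have h1 : HasDerivAt (fun x : ℝ => (x + c) ^ (j + 2) / (Nat.factorial (j + 2)))
        ((x + c) ^ (j + 1) / (Nat.factorial (j + 1))) x := by
      have := (((hasDerivAt_id x).add_const c).pow (j + 2)).div_const
        ((Nat.factorial (j + 2) : ℝ))
      convert this using 1
      · rfl
      · rfl
      · rfl
      have hf1 : (Nat.factorial (j + 1) : ℝ) ≠ 0 := Nat.cast_ne_zero.mpr (Nat.factorial_ne_zero _)
      have hf2 : (Nat.factorial (j + 2) : ℝ) ≠ 0 := Nat.cast_ne_zero.mpr (Nat.factorial_ne_zero _)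
      rw [Nat.factorial_succ (j + 1)]
      push_cast
      field_simp
      simp only [id]
      ring
    have h2 : HasDerivAt (fun x : ℝ => ∑ i ∈ Finset.range (j + 1),
        δ (i + n - 1 - (j + 1)) * x ^ i / (Nat.factorial i))
        (∑ i ∈ Finset.range j, δ (i + n - 1 - j) * x ^ i / (Nat.factorial i)) x := by
      have h3 : HasDerivAt (fun x : ℝ => ∑ i ∈ Finset.range (j + 1),
          δ (i + n - 1 - (j + 1)) * x ^ i / (Nat.factorial i))
          (∑ i ∈ Finset.range (j + 1),
            δ (i + n - 1 - (j + 1)) * ((i : ℝ) * x ^ (i - 1)) / (Nat.factorial i)) x := by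
        apply HasDerivAt.fun_sum
        intro i _
        exact ((hasDerivAt_pow i x).const_mul _).div_const _
      convert h3 using 1
      rw [Finset.sum_range_succ']
      simp only [Nat.cast_zero, zero_mul, mul_zero, zero_div, add_zero]
      apply Finset.sum_congr rfl
      intro i hi
      have hidx : i + 1 + n - 1 - (j + 1) = i + n - 1 - j := by omega
      rw [hidx]
      have hf : (Nat.factorial i : ℝ) ≠ 0 := Nat.cast_ne_zero.mpr (Nat.factorial_ne_zero _)
      have hf1 : (Nat.factorial (i + 1) : ℝ) ≠ 0 := Nat.cast_ne_zero.mpr (Nat.factorial_ne_zero _)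
      simp only [Nat.add_sub_cancel, Nat.factorial_succ]
      push_cast
      field_simp
    exact h1.add h2

lemma Sker_top (n : ℕ) (hn : 1 ≤ n) (c : ℝ) (δ : ℕ → ℝ) : Sker n c δ n = Pker n c δ := by
  obtain ⟨m, rfl⟩ : ∃ m, n = m + 1 := ⟨n - 1, by omega⟩
  funext x
  have h1 : ∀ i : ℕ, i + (m + 1) - 1 - m = i := fun i => by omega
  simp only [Sker, Pker, h1, Nat.add_sub_cancel]

/-- if the parameters match the Hermite weights at both endpoints, then the
Hermite quadrature error admits the exact representation
`∫ f = Σ w_j^a f⁽ʲ⁾(a) + Σ w_j^b f⁽ʲ⁾(b) + ∫ (-1)^n f⁽ⁿ⁾ P(·,θ)`,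
requiring only the `n`-th derivative of `f`. -/
theorem stmt14 (n : ℕ) (hn : 1 ≤ n) (a b : ℝ) (hab : a < b) (c : ℝ) (δ : ℕ → ℝ)
    (hmatch : ∀ j < n, alphaA n a c δ j = wA n a b j ∧ alphaB n b c δ j = wB n a b j) :
    ∀ f : ℝ → ℝ, ContDiffOn ℝ (n : ℕ∞) f (Set.Icc a b) →
      ∫ x in a..b, f x
        = (∑ j ∈ Finset.range n, wA n a b j * iteratedDerivWithin j f (Set.Icc a b) a)
          + (∑ j ∈ Finset.range n, wB n a b j * iteratedDerivWithin j f (Set.Icc a b) b)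
          + ∫ x in a..b, (-1 : ℝ) ^ n * iteratedDerivWithin n f (Set.Icc a b) x * Pker n c δ x := by
  intro f hf
  set s : Set ℝ := Set.Icc a b with hs
  have hab' : a ≤ b := le_of_lt hab
  have hus : UniqueDiffOn ℝ s := uniqueDiffOn_Icc hab
  set F : ℕ → ℝ → ℝ := fun m => iteratedDerivWithin m f s with hF
  -- continuity of F m for m ≤ n
  have hFc : ∀ m ≤ n, ContinuousOn (F m) s := fun m hm =>
    hf.continuousOn_iteratedDerivWithin (by exact_mod_cast hm) hus
  -- derivative of F m inside
  have hFd : ∀ m < n, ∀ x ∈ Set.Ioo a b, HasDerivAt (F m) (F (m + 1) x) x := by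
    intro m hm x hx
    have hxs : x ∈ s := Set.mem_Icc_of_Ioo hx
    have hdw : DifferentiableWithinAt ℝ (F m) s x :=
      (hf.differentiableOn_iteratedDerivWithin (by exact_mod_cast hm) hus) x hxs
    have : HasDerivWithinAt (F m) (F (m + 1) x) s x := by
      have := hdw.hasDerivWithinAt
      rwa [← iteratedDerivWithin_succ] at this
    exact this.hasDerivAt (Icc_mem_nhds hx.1 hx.2)
  -- interval integrability of products
  have hint : ∀ m ≤ n, IntervalIntegrable (fun x => F m x * Sker n c δ m x)
      MeasureTheory.volume a b := by
    intro m hm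
    apply ContinuousOn.intervalIntegrable
    rw [Set.uIcc_of_le hab']
    exact (hFc m hm).mul (Sker_continuous n c δ m).continuousOn
  have hint2 : ∀ m ≤ n, IntervalIntegrable (fun x => F m x * Sker n c δ (m + 1) x)
      MeasureTheory.volume a b := by
    intro m hm
    apply ContinuousOn.intervalIntegrable
    rw [Set.uIcc_of_le hab']
    exact (hFc m hm).mul (Sker_continuous n c δ (m + 1)).continuousOn
  -- integration by parts step
  have IBP : ∀ m, m + 1 ≤ n →
      ∫ x in a..b, F (m + 1) x * Sker n c δ (m + 1) x
        = (F m b * Sker n c δ (m + 1) b - F m a * Sker n c δ (m + 1) a)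
          - ∫ x in a..b, F m x * Sker n c δ m x := by
    intro m hm
    have key : ∫ x in a..b,
        (F (m + 1) x * Sker n c δ (m + 1) x + F m x * Sker n c δ m x)
        = F m b * Sker n c δ (m + 1) b - F m a * Sker n c δ (m + 1) a := by
      apply integral_eq_sub_of_hasDeriv_right_of_le hab'
      · exact (hFc m (le_of_lt hm)).mul (Sker_continuous n c δ (m + 1)).continuousOn
      · intro x hx
        exact ((hFd m hm x hx).mul (Sker_hasDerivAt n c δ m hm x)).hasDerivWithinAt
      · exact (hint (m + 1) hm).add (hint m (le_of_lt hm))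
    have := intervalIntegral.integral_add (hint (m + 1) hm) (hint m (le_of_lt hm))
    rw [this] at key
    linarith [key]
  -- main induction
  have MAIN : ∀ m, m ≤ n →
      ∫ x in a..b, F m x * Sker n c δ m x
        = (∑ j ∈ Finset.range m, (-1 : ℝ) ^ (m - 1 - j) *
            (F j b * Sker n c δ (j + 1) b - F j a * Sker n c δ (j + 1) a))
          + (-1 : ℝ) ^ m * ∫ x in a..b, f x := by
    intro m
    induction m with
    | zero =>
      intro _
      simp [hF, Sker, iteratedDerivWithin_zero]
    | succ m ih =>
      intro hm
      rw [IBP m hm, ih (by omega), Finset.sum_range_succ]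
      simp only [Nat.add_sub_cancel]
      have hsg : ∀ j ∈ Finset.range m, (-1 : ℝ) ^ (m - j) *
            (F j b * Sker n c δ (j + 1) b - F j a * Sker n c δ (j + 1) a)
          = -((-1 : ℝ) ^ (m - 1 - j) *
            (F j b * Sker n c δ (j + 1) b - F j a * Sker n c δ (j + 1) a)) := by
        intro j hj
        have hlt := Finset.mem_range.mp hj
        rw [show m - j = (m - 1 - j) + 1 by omega, pow_succ]
        ring
      rw [Finset.sum_congr rfl hsg]
      rw [Finset.sum_neg_distrib, Nat.sub_self, pow_zero, pow_succ]
      ring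
  have hmain := MAIN n le_rfl
  rw [Sker_top n hn c δ] at hmain
  have hpull : (∫ x in a..b, (-1 : ℝ) ^ n * F n x * Pker n c δ x)
      = (-1 : ℝ) ^ n * ∫ x in a..b, F n x * Pker n c δ x := by
    simp only [mul_assoc]
    exact intervalIntegral.integral_const_mul _ _
  have hsq : ((-1 : ℝ)) ^ n * ((-1 : ℝ)) ^ n = 1 := by
    rw [← pow_add, ← two_mul, pow_mul]
    norm_num
  have hzero : (∑ j ∈ Finset.range n, wA n a b j * F j a)
      + (∑ j ∈ Finset.range n, wB n a b j * F j b)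
      + (-1 : ℝ) ^ n * (∑ j ∈ Finset.range n, (-1 : ℝ) ^ (n - 1 - j) *
          (F j b * Sker n c δ (j + 1) b - F j a * Sker n c δ (j + 1) a)) = 0 := by
    rw [Finset.mul_sum, ← Finset.sum_add_distrib, ← Finset.sum_add_distrib]
    apply Finset.sum_eq_zero
    intro j hj
    have hjn : j < n := Finset.mem_range.mp hj
    obtain ⟨hA, hB⟩ := hmatch j hjn
    have hwA : wA n a b j = (-1 : ℝ) ^ (j + 1) * Sker n c δ (j + 1) a := by
      rw [← hA]; rfl
    have hwB : wB n a b j = (-1 : ℝ) ^ j * Sker n c δ (j + 1) b := by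
      rw [← hB]; rfl
    have hsgn : (-1 : ℝ) ^ n * (-1 : ℝ) ^ (n - 1 - j) = (-1 : ℝ) ^ (j + 1) := by
      rw [← pow_add, show n + (n - 1 - j) = 2 * (n - 1 - j) + (j + 1) by omega,
        pow_add, pow_mul]
      norm_num
    rw [hwA, hwB, ← mul_assoc, hsgn, pow_succ]
    ring
  rw [hpull, hmain, mul_add, ← mul_assoc, hsq, one_mul]
  linarith [hzero]
end

section
/- Let a < b be real numbers. Then the L^1 norm of the n = 2 Hermite quadrature kernel over [a,b] is ∫_a^b |K_2(x)| dx = √3 · (b-a)^3 / 54. -/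
open Finset intervalIntegral

/-- The `n = 2` Hermite quadrature kernel `K₂(x) = (x-(a+b)/2)²/2 - (b-a)²/24`. -/
noncomputable def K2 (a b x : ℝ) : ℝ := (x - (a + b) / 2) ^ 2 / 2 - (b - a) ^ 2 / 24

lemma K2cont (a b : ℝ) : Continuous (K2 a b) := by
  unfold K2; fun_prop

lemma K2int (a b c d : ℝ) :
    ∫ x in c..d, K2 a b x =
      ((d - (a + b) / 2) ^ 3 / 6 - (b - a) ^ 2 / 24 * d)
        - ((c - (a + b) / 2) ^ 3 / 6 - (b - a) ^ 2 / 24 * c) := by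
  apply intervalIntegral.integral_eq_sub_of_hasDerivAt
  · intro x _
    have h1 : HasDerivAt (fun y : ℝ => (y - (a + b) / 2) ^ 3 / 6 - (b - a) ^ 2 / 24 * y)
        ((3 * (x - (a + b) / 2) ^ 2 * 1) / 6 - (b - a) ^ 2 / 24 * 1) x := by
      exact ((((hasDerivAt_id x).sub_const _).pow 3).div_const 6).sub
        ((hasDerivAt_id x).const_mul _)
    refine h1.congr_deriv ?_
    unfold K2; ring
  · exact (K2cont a b).intervalIntegrable c d

/-- the `L¹` norm of the `n = 2` Hermite quadrature kernel over `[a,b]`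
is `√3 (b-a)³/54`. -/
theorem stmt17 (a b : ℝ) (hab : a < b) :
    ∫ x in a..b, |K2 a b x| = Real.sqrt 3 * (b - a) ^ 3 / 54 := by
  have hs2 : Real.sqrt 3 ^ 2 = 3 := Real.sq_sqrt (by norm_num)
  have hs0 : (0:ℝ) < Real.sqrt 3 := Real.sqrt_pos.mpr (by norm_num)
  have hs1 : (1:ℝ) ≤ Real.sqrt 3 := by nlinarith
  have hs2' : Real.sqrt 3 ≤ 2 := by nlinarith
  set s := Real.sqrt 3 with hsdef
  have hba : 0 < b - a := by linarith
  have h1 : a ≤ (a + b) / 2 - (b - a) * s / 6 := by nlinarith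
  have h2 : (a + b) / 2 - (b - a) * s / 6 ≤ (a + b) / 2 + (b - a) * s / 6 := by nlinarith
  have h3 : (a + b) / 2 + (b - a) * s / 6 ≤ b := by nlinarith
  have hint : ∀ c d : ℝ, IntervalIntegrable (fun x => |K2 a b x|) MeasureTheory.volume c d :=
    fun c d => ((K2cont a b).abs).intervalIntegrable c d
  rw [← intervalIntegral.integral_add_adjacent_intervals
      (hint a ((a + b) / 2 - (b - a) * s / 6)) (hint ((a + b) / 2 - (b - a) * s / 6) b),
    ← intervalIntegral.integral_add_adjacent_intervals
      (hint ((a + b) / 2 - (b - a) * s / 6) ((a + b) / 2 + (b - a) * s / 6))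
      (hint ((a + b) / 2 + (b - a) * s / 6) b)]
  have e1 : ∫ x in a..((a + b) / 2 - (b - a) * s / 6), |K2 a b x|
      = ∫ x in a..((a + b) / 2 - (b - a) * s / 6), K2 a b x := by
    apply intervalIntegral.integral_congr
    intro x hx
    rw [Set.uIcc_of_le h1] at hx
    obtain ⟨hxa, hxr⟩ := hx
    apply abs_of_nonneg
    unfold K2
    nlinarith [sq_nonneg (x - (a + b) / 2 + (b - a) * s / 6)]
  have e2 : ∫ x in ((a + b) / 2 - (b - a) * s / 6)..((a + b) / 2 + (b - a) * s / 6), |K2 a b x|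
      = ∫ x in ((a + b) / 2 - (b - a) * s / 6)..((a + b) / 2 + (b - a) * s / 6), -K2 a b x := by
    apply intervalIntegral.integral_congr
    intro x hx
    rw [Set.uIcc_of_le h2] at hx
    obtain ⟨hxl, hxr⟩ := hx
    show |K2 a b x| = -K2 a b x
    rw [abs_of_nonpos]
    unfold K2
    nlinarith [mul_nonneg (sub_nonneg.mpr hxl) (sub_nonneg.mpr hxr)]
  have e3 : ∫ x in ((a + b) / 2 + (b - a) * s / 6)..b, |K2 a b x|
      = ∫ x in ((a + b) / 2 + (b - a) * s / 6)..b, K2 a b x := by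
    apply intervalIntegral.integral_congr
    intro x hx
    rw [Set.uIcc_of_le h3] at hx
    obtain ⟨hxl, hxr⟩ := hx
    apply abs_of_nonneg
    unfold K2
    nlinarith [sq_nonneg (x - (a + b) / 2 - (b - a) * s / 6)]
  rw [e1, e2, e3, intervalIntegral.integral_neg, K2int, K2int, K2int]
  linear_combination (-(b - a) ^ 3 * s / 324) * hs2
end

section
/- Let a < b be real numbers, let f : ℝ → ℝ be twice continuously differentiable on [a,b], and suppose |f''(x)| ≤ M for all x ∈ [a,b]. Then the n = 2 Hermite quadrature error satisfies |E_2| = | ∫_a^b f(x) dx - (b-a)/2 · (f(a) + f(b)) - (b-a)^2/12 · (f'(a) - f'(b)) | ≤ M · √3 · (b-a)^3 / 54. -/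
open Finset intervalIntegral

set_option maxHeartbeats 2000000

/-- the classical bound `|E₂| ≤ M √3 (b-a)³/54` for the `n = 2` Hermite
quadrature error under the uniform bound `|f''| ≤ M` on `[a,b]`. -/
theorem stmt18 (a b : ℝ) (hab : a < b) (f : ℝ → ℝ) (M : ℝ)
    (hf : ContDiffOn ℝ 2 f (Set.Icc a b))
    (hM : ∀ x ∈ Set.Icc a b, |iteratedDerivWithin 2 f (Set.Icc a b) x| ≤ M) :
    |(∫ x in a..b, f x) - (b - a) / 2 * (f a + f b)
        - (b - a) ^ 2 / 12 *
          (iteratedDerivWithin 1 f (Set.Icc a b) a - iteratedDerivWithin 1 f (Set.Icc a b) b)|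
      ≤ M * Real.sqrt 3 * (b - a) ^ 3 / 54 := by
  have hs : UniqueDiffOn ℝ (Set.Icc a b) := uniqueDiffOn_Icc hab
  set s : Set ℝ := Set.Icc a b with hsdef
  set g : ℝ → ℝ := derivWithin f s with hgdef
  set g2 : ℝ → ℝ := derivWithin g s with hg2def
  have hma : a ∈ s := Set.left_mem_Icc.2 hab.le
  have hmb : b ∈ s := Set.right_mem_Icc.2 hab.le
  have h1 : ∀ x ∈ s, iteratedDerivWithin 1 f s x = g x := fun x hx =>
    congrFun iteratedDerivWithin_one x
  have h2 : ∀ x ∈ s, iteratedDerivWithin 2 f s x = g2 x := by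
    intro x hx
    rw [show (2:ℕ) = 1+1 from rfl, iteratedDerivWithin_succ]
    exact derivWithin_congr (fun y hy => h1 y hy) (h1 x hx)
  have hM' : ∀ x ∈ s, |g2 x| ≤ M := fun x hx => (h2 x hx) ▸ hM x hx
  have hfc : ContinuousOn f s := hf.continuousOn
  have hg1 : ContDiffOn ℝ 1 g s := hf.derivWithin hs (by norm_num)
  have hgc : ContinuousOn g s := hg1.continuousOn
  have hg2cd : ContDiffOn ℝ 0 g2 s := hg1.derivWithin hs (by norm_num)
  have hg2c : ContinuousOn g2 s := hg2cd.continuousOn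
  have hdf : ∀ x ∈ Set.Ioo a b, HasDerivAt f (g x) x := fun x hx =>
    ((hf.differentiableOn (by norm_num) x (Set.Ioo_subset_Icc_self hx)).hasDerivWithinAt).hasDerivAt
      (Icc_mem_nhds hx.1 hx.2)
  have hdg : ∀ x ∈ Set.Ioo a b, HasDerivAt g (g2 x) x := fun x hx =>
    ((hg1.differentiableOn (by norm_num) x (Set.Ioo_subset_Icc_self hx)).hasDerivWithinAt).hasDerivAt
      (Icc_mem_nhds hx.1 hx.2)
  set K : ℝ → ℝ := fun t => (t-a)^2/2 - (b-a)*(t-a)/2 + (b-a)^2/12 with hKdef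
  set L : ℝ → ℝ := fun t => (t-a) - (b-a)/2 with hLdef
  have hKd : ∀ t : ℝ, HasDerivAt K (L t) t := by
    intro t
    have h1' : HasDerivAt (fun t : ℝ => t - a) 1 t := (hasDerivAt_id t).sub_const a
    have := (((h1'.pow 2).div_const 2).sub (((h1'.const_mul (b-a))).div_const 2)).add_const
      ((b-a)^2/12)
    refine HasDerivAt.congr_deriv this ?_
    simp [hLdef]
  have hLd : ∀ t : ℝ, HasDerivAt L 1 t := fun t =>
    ((hasDerivAt_id t).sub_const a).sub_const ((b-a)/2)
  have hKcont : Continuous K := by fun_prop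
  have hLcont : Continuous L := by fun_prop
  have huI : Set.uIcc a b = s := Set.uIcc_of_le hab.le
  have hfcu : ContinuousOn f (Set.uIcc a b) := by rw [huI]; exact hfc
  have hgcu : ContinuousOn g (Set.uIcc a b) := by rw [huI]; exact hgc
  have hg2cu : ContinuousOn g2 (Set.uIcc a b) := by rw [huI]; exact hg2c
  have intf : IntervalIntegrable f MeasureTheory.volume a b := hfcu.intervalIntegrable
  have intLg : IntervalIntegrable (fun t => L t * g t) MeasureTheory.volume a b :=
    (hLcont.continuousOn.mul hgcu).intervalIntegrable
  have intKg2 : IntervalIntegrable (fun t => K t * g2 t) MeasureTheory.volume a b :=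
    (hKcont.continuousOn.mul hg2cu).intervalIntegrable
  -- first integration by parts
  have A : (∫ t in a..b, (L t * g t + K t * g2 t)) = K b * g b - K a * g a := by
    apply integral_eq_sub_of_hasDeriv_right_of_le hab.le
    · exact hKcont.continuousOn.mul hgc
    · intro x hx
      exact (((hKd x).mul (hdg x hx)).hasDerivWithinAt)
    · exact ((hLcont.continuousOn.mul hgcu).add
        (hKcont.continuousOn.mul hg2cu)).intervalIntegrable
  -- second integration by parts
  have B : (∫ t in a..b, (f t + L t * g t)) = L b * f b - L a * f a := by
    apply integral_eq_sub_of_hasDeriv_right_of_le hab.le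
    · exact hLcont.continuousOn.mul hfc
    · intro x hx
      have := ((hLd x).mul (hdf x hx)).hasDerivWithinAt (s := Set.Ioi x)
      simpa [Pi.mul_def] using this
    · exact (hfcu.add (hLcont.continuousOn.mul hgcu)).intervalIntegrable
  have EA : (∫ t in a..b, L t * g t) + (∫ t in a..b, K t * g2 t) = K b * g b - K a * g a := by
    rw [← intervalIntegral.integral_add intLg intKg2]; exact A
  have EB : (∫ x in a..b, f x) + (∫ t in a..b, L t * g t) = L b * f b - L a * f a := by
    rw [← intervalIntegral.integral_add intf intLg]; exact B
  have hKa : K a = (b-a)^2/12 := by simp [hKdef]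
  have hKb : K b = (b-a)^2/12 := by simp [hKdef]; ring
  have hLa : L a = -((b-a)/2) := by simp [hLdef]
  have hLb : L b = (b-a)/2 := by simp [hLdef]; ring
  have key : (∫ x in a..b, f x) - (b - a) / 2 * (f a + f b)
      - (b - a) ^ 2 / 12 * (g a - g b) = ∫ t in a..b, K t * g2 t := by
    rw [hKa, hKb] at EA; rw [hLa, hLb] at EB
    linarith [EA, EB]
  rw [h1 a hma, h1 b hmb, key]
  -- now bound the kernel integral
  set r : ℝ := Real.sqrt 3 with hrdef
  have hr2 : r^2 = 3 := Real.sq_sqrt (by norm_num)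
  have hr0 : 0 ≤ r := Real.sqrt_nonneg 3
  have hr1 : 1 < r := by
    rw [hrdef]
    have : (1:ℝ) < 3 := by norm_num
    nlinarith [Real.sq_sqrt (show (0:ℝ) ≤ 3 by norm_num), Real.sqrt_nonneg 3]
  have hrlt : r < 2 := by
    nlinarith [hr2, hr0]
  have hM0 : 0 ≤ M := le_trans (abs_nonneg _) (hM' a hma)
  set t1 : ℝ := a + (b-a)*(3-r)/6 with ht1def
  set t2 : ℝ := a + (b-a)*(3+r)/6 with ht2def
  have hba : (0:ℝ) < b - a := sub_pos.2 hab
  have hat1 : a < t1 := by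
    rw [ht1def]
    nlinarith [mul_pos hba (show (0:ℝ) < 3 - r by linarith)]
  have ht12 : t1 < t2 := by
    rw [ht1def, ht2def]
    nlinarith [mul_pos hba (show (0:ℝ) < r by linarith)]
  have ht2b : t2 < b := by
    rw [ht2def]
    nlinarith [mul_pos hba (show (0:ℝ) < 3 - r by linarith)]
  set P : ℝ → ℝ := fun t => (t-a)^3/6 - (b-a)*(t-a)^2/4 + (b-a)^2*(t-a)/12 with hPdef
  have hPd : ∀ t : ℝ, HasDerivAt P (K t) t := by
    intro t
    have h1' : HasDerivAt (fun t : ℝ => t - a) 1 t := (hasDerivAt_id t).sub_const a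
    have := (((h1'.pow 3).div_const 6).sub (((h1'.pow 2).const_mul (b-a)).div_const 4)).add
      ((h1'.const_mul ((b-a)^2)).div_const 12)
    refine HasDerivAt.congr_deriv this ?_
    simp [hKdef]; ring
  have intK : ∀ c d : ℝ, IntervalIntegrable K MeasureTheory.volume c d := fun c d =>
    hKcont.intervalIntegrable c d
  have intKabs : ∀ c d : ℝ, IntervalIntegrable (fun t => |K t|) MeasureTheory.volume c d :=
    fun c d => hKcont.abs.intervalIntegrable c d
  have FTC : ∀ c d : ℝ, (∫ t in c..d, K t) = P d - P c := fun c d =>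
    integral_eq_sub_of_hasDerivAt (fun t _ => hPd t) (intK c d)
  -- sign analysis
  have sign1 : Set.EqOn (fun t => |K t|) K (Set.uIcc a t1) := by
    intro t ht
    rw [Set.uIcc_of_le hat1.le] at ht
    have h1' : a ≤ t := ht.1
    have h2' : t ≤ t1 := ht.2
    have : 0 ≤ K t := by
      have e1 : 0 ≤ (b-a)*(3-r)/6 - (t-a) := by rw [ht1def] at h2'; linarith
      have e2 : 0 ≤ (b-a)*(3+r)/6 - (t-a) := by nlinarith
      have := mul_nonneg e1 e2
      simp only [hKdef]
      nlinarith
    exact abs_of_nonneg this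
  have sign2 : Set.EqOn (fun t => |K t|) (fun t => -K t) (Set.uIcc t1 t2) := by
    intro t ht
    rw [Set.uIcc_of_le ht12.le] at ht
    have h1' : t1 ≤ t := ht.1
    have h2' : t ≤ t2 := ht.2
    have : K t ≤ 0 := by
      have e1 : 0 ≤ (t-a) - (b-a)*(3-r)/6 := by rw [ht1def] at h1'; linarith
      have e2 : 0 ≤ (b-a)*(3+r)/6 - (t-a) := by rw [ht2def] at h2'; linarith
      have := mul_nonneg e1 e2
      simp only [hKdef]
      nlinarith
    exact abs_of_nonpos this
  have sign3 : Set.EqOn (fun t => |K t|) K (Set.uIcc t2 b) := by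
    intro t ht
    rw [Set.uIcc_of_le ht2b.le] at ht
    have h1' : t2 ≤ t := ht.1
    have h2' : t ≤ b := ht.2
    have : 0 ≤ K t := by
      rw [ht2def] at h1'
      have e1 : 0 ≤ (t-a) - (b-a)*(3-r)/6 := by nlinarith [mul_nonneg hba.le hr0]
      have e2 : 0 ≤ (t-a) - (b-a)*(3+r)/6 := by linarith
      have := mul_nonneg e1 e2
      simp only [hKdef]
      nlinarith
    exact abs_of_nonneg this
  have split : (∫ t in a..b, |K t|) =
      (∫ t in a..t1, |K t|) + (∫ t in t1..t2, |K t|) + (∫ t in t2..b, |K t|) := by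
    rw [intervalIntegral.integral_add_adjacent_intervals (intKabs a t1) (intKabs t1 t2),
      intervalIntegral.integral_add_adjacent_intervals (intKabs a t2) (intKabs t2 b)]
  have val1 : (∫ t in a..t1, |K t|) = P t1 - P a := by
    rw [intervalIntegral.integral_congr sign1, FTC]
  have val2 : (∫ t in t1..t2, |K t|) = -(P t2 - P t1) := by
    rw [intervalIntegral.integral_congr sign2, intervalIntegral.integral_neg, FTC]
  have val3 : (∫ t in t2..b, |K t|) = P b - P t2 := by
    rw [intervalIntegral.integral_congr sign3, FTC]
  have hKabs : (∫ t in a..b, |K t|) = r * (b-a)^3 / 54 := by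
    rw [split, val1, val2, val3]
    have hPa : P a = 0 := by simp [hPdef]
    have hPb : P b = 0 := by simp [hPdef]; ring
    rw [hPa, hPb]
    simp only [hPdef, ht1def, ht2def]
    linear_combination (-((b-a)^3 * r) / 324) * hr2
  calc |∫ t in a..b, K t * g2 t| ≤ ∫ t in a..b, |K t * g2 t| :=
        intervalIntegral.abs_integral_le_integral_abs hab.le
    _ ≤ ∫ t in a..b, |K t| * M := by
        apply intervalIntegral.integral_mono_on hab.le
          ((hKcont.continuousOn.mul hg2cu).abs.intervalIntegrable)
          ((hKcont.abs.continuousOn.mul continuousOn_const).intervalIntegrable)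
        intro x hx
        rw [Pi.mul_apply, Pi.mul_apply, abs_mul]
        exact mul_le_mul_of_nonneg_left (hM' x hx) (abs_nonneg _)
    _ = M * ∫ t in a..b, |K t| := by
        rw [← intervalIntegral.integral_const_mul]
        congr 1; ext t; ring
    _ = M * (r * (b-a)^3 / 54) := by rw [hKabs]
    _ = M * r * (b - a) ^ 3 / 54 := by ring
end

section
/- Let a < b be real numbers and let f : ℝ → ℝ be twice continuously differentiable on [a,b]. Let c = (inf_{x∈[a,b]} f''(x) + sup_{x∈[a,b]} f''(x))/2 be the midrange of f'' on [a,b] and let Δ(x) = f''(x) - c. Then the n = 2 Hermite quadrature error satisfies the improved bound |E_2| = | ∫_a^b f(x) dx - (b-a)/2 · (f(a) + f(b)) - (b-a)^2/12 · (f'(a) - f'(b)) | ≤ ‖Δ‖_∞ · √3 · (b-a)^3 / 54, where ‖Δ‖_∞ = sup_{x∈[a,b]} |Δ(x)|; moreover ‖Δ‖_∞ ≤ sup_{x∈[a,b]} |f''(x)|, so this bound is at least as tight as the bound M · √3 · (b-a)^3 / 54 with M = sup_{x∈[a,b]} |f''(x)|. -/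
open Finset intervalIntegral

set_option maxHeartbeats 1000000

/-- the improved midrange bound `|E₂| ≤ ‖Δ‖_∞ √3 (b-a)³/54`, where
`Δ = f'' - c` with `c` the midrange of `f''` on `[a,b]`; moreover
`‖Δ‖_∞ ≤ sup_{[a,b]} |f''|`, so this bound is at least as tight as the classical one. -/
theorem stmt19 (a b : ℝ) (hab : a < b) (f : ℝ → ℝ)
    (hf : ContDiffOn ℝ 2 f (Set.Icc a b)) :
    let f2 : ℝ → ℝ := iteratedDerivWithin 2 f (Set.Icc a b)
    let c : ℝ := (sInf (f2 '' Set.Icc a b) + sSup (f2 '' Set.Icc a b)) / 2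
    let Δ : ℝ → ℝ := fun x => f2 x - c
    let normΔ : ℝ := sSup ((fun x => |Δ x|) '' Set.Icc a b)
    |(∫ x in a..b, f x) - (b - a) / 2 * (f a + f b)
        - (b - a) ^ 2 / 12 *
          (iteratedDerivWithin 1 f (Set.Icc a b) a - iteratedDerivWithin 1 f (Set.Icc a b) b)|
      ≤ normΔ * Real.sqrt 3 * (b - a) ^ 3 / 54
    ∧ normΔ ≤ sSup ((fun x => |f2 x|) '' Set.Icc a b) := by
  intro f2 c Δ normΔ
  have hab' : a ≤ b := hab.le
  have hne : (Set.Icc a b).Nonempty := Set.nonempty_Icc.2 hab'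
  have hUD : UniqueDiffOn ℝ (Set.Icc a b) := uniqueDiffOn_Icc hab
  set s3 : ℝ := Real.sqrt 3 with hs3def
  have h3 : s3 ^ 2 = 3 := Real.sq_sqrt (by norm_num)
  have h3pos : 0 < s3 := Real.sqrt_pos.2 (by norm_num)
  have h3lt : s3 < 3 := by nlinarith
  set p : ℝ := a + (b - a) * (3 - s3) / 6 with hpdef
  set q : ℝ := a + (b - a) * (3 + s3) / 6 with hqdef
  have hap : a < p := by rw [hpdef]; nlinarith
  have hpq : p < q := by rw [hpdef, hqdef]; nlinarith
  have hqb : q < b := by rw [hqdef]; nlinarith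
  have hpqsum : p + q = a + b := by rw [hpdef, hqdef]; ring
  have hpq2 : p * q = a * b + (b - a) ^ 2 / 6 := by
    rw [hpdef, hqdef]; linear_combination (-(b - a) ^ 2 / 36) * h3
  set K : ℝ → ℝ := fun x => (x - p) * (x - q) / 2 with hKdef
  set A : ℝ → ℝ := fun x => x ^ 3 / 6 - (p + q) * x ^ 2 / 4 + p * q * x / 2 with hAdef
  have hKc : Continuous K := by rw [hKdef]; continuity
  have hKderiv : ∀ x : ℝ, HasDerivAt K ((1 * (x - q) + (x - p) * 1) / 2) x := fun x =>
    (((hasDerivAt_id x).sub_const p).mul ((hasDerivAt_id x).sub_const q)).div_const 2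
  have hAderiv : ∀ x : ℝ, HasDerivAt A (K x) x := by
    intro x
    have h :=
      ((((hasDerivAt_pow 3 x).div_const 6).sub
        (((hasDerivAt_pow 2 x).const_mul (p + q)).div_const 4)).add
        (((hasDerivAt_id x).const_mul (p * q)).div_const 2))
    refine h.congr_deriv ?_
    rw [hKdef]; push_cast; ring
  -- first derivative
  set f1 : ℝ → ℝ := derivWithin f (Set.Icc a b) with hf1def
  have h1a : iteratedDerivWithin 1 f (Set.Icc a b) a = f1 a :=
    congrFun iteratedDerivWithin_one a
  have h1b : iteratedDerivWithin 1 f (Set.Icc a b) b = f1 b :=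
    congrFun iteratedDerivWithin_one b
  set g2 : ℝ → ℝ := derivWithin f1 (Set.Icc a b) with hg2def
  have h2 : ∀ x ∈ Set.Icc a b, f2 x = g2 x := by
    intro x hx
    show iteratedDerivWithin 2 f (Set.Icc a b) x = g2 x
    rw [show (2 : ℕ) = 1 + 1 from rfl, iteratedDerivWithin_succ',
      iteratedDerivWithin_one]
  have hfc : ContinuousOn f (Set.Icc a b) := hf.continuousOn
  have hf1cd : ContDiffOn ℝ 1 f1 (Set.Icc a b) := hf.derivWithin hUD (by norm_num)
  have hf1c : ContinuousOn f1 (Set.Icc a b) := hf1cd.continuousOn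
  have hg2cd : ContDiffOn ℝ 0 g2 (Set.Icc a b) := hf1cd.derivWithin hUD (by norm_num)
  have hg2c : ContinuousOn g2 (Set.Icc a b) := hg2cd.continuousOn
  have hf2c : ContinuousOn f2 (Set.Icc a b) := hg2c.congr h2
  have hfd : ∀ x ∈ Set.Ioo a b, HasDerivAt f (f1 x) x := fun x hx =>
    ((hf.differentiableOn (by norm_num) x (Set.Ioo_subset_Icc_self hx)).hasDerivWithinAt).hasDerivAt
      (Icc_mem_nhds hx.1 hx.2)
  have hf1d : ∀ x ∈ Set.Ioo a b, HasDerivAt f1 (g2 x) x := fun x hx =>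
    ((hf1cd.differentiableOn (by norm_num) x (Set.Ioo_subset_Icc_self hx)).hasDerivWithinAt).hasDerivAt
      (Icc_mem_nhds hx.1 hx.2)
  -- the auxiliary function for integration by parts
  set G : ℝ → ℝ := fun x => K x * f1 x - (x - (p + q) / 2) * f x with hGdef
  have hGcont : ContinuousOn G (Set.Icc a b) := by
    apply ContinuousOn.sub
    · exact hKc.continuousOn.mul hf1c
    · exact ((continuous_id.sub continuous_const).continuousOn).mul hfc
  have hGd : ∀ x ∈ Set.Ioo a b, HasDerivAt G (K x * g2 x - f x) x := by
    intro x hx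
    have h := ((hKderiv x).mul (hf1d x hx)).sub
      (((hasDerivAt_id x).sub_const ((p + q) / 2)).mul (hfd x hx))
    refine h.congr_deriv ?_
    simp only [id_eq]; rw [hKdef]; ring
  have hKg2fInt : IntervalIntegrable (fun x => K x * g2 x - f x) MeasureTheory.volume a b := by
    apply ContinuousOn.intervalIntegrable
    rw [Set.uIcc_of_le hab']
    exact (hKc.continuousOn.mul hg2c).sub hfc
  have key : ∫ x in a..b, (K x * g2 x - f x) = G b - G a :=
    integral_eq_sub_of_hasDeriv_right_of_le hab' hGcont
      (fun x hx => (hGd x hx).hasDerivWithinAt) hKg2fInt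
  have hfInt : IntervalIntegrable f MeasureTheory.volume a b := by
    apply ContinuousOn.intervalIntegrable
    rwa [Set.uIcc_of_le hab']
  have hKint : ∀ u v : ℝ, ∫ x in u..v, K x = A v - A u := fun u v =>
    integral_eq_sub_of_hasDerivAt (fun x _ => hAderiv x) (hKc.intervalIntegrable u v)
  have hKint0 : ∫ x in a..b, K x = 0 := by
    rw [hKint a b, hAdef]
    linear_combination (-(b ^ 2 - a ^ 2) / 4) * hpqsum + ((b - a) / 2) * hpq2
  have hKa : K a = (b - a) ^ 2 / 12 := by
    rw [hKdef, hpdef, hqdef]; linear_combination (-(b - a) ^ 2 / 72) * h3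
  have hKb : K b = (b - a) ^ 2 / 12 := by
    rw [hKdef, hpdef, hqdef]; linear_combination (-(b - a) ^ 2 / 72) * h3
  -- the error representation
  have hE2 : (∫ x in a..b, f x) - (b - a) / 2 * (f a + f b)
      - (b - a) ^ 2 / 12 * (f1 a - f1 b) = ∫ x in a..b, K x * Δ x := by
    have congr1 : ∫ x in a..b, K x * Δ x = ∫ x in a..b, (K x * (g2 x - c)) := by
      apply integral_congr
      intro x hx
      rw [Set.uIcc_of_le hab'] at hx
      show K x * Δ x = _
      rw [show Δ x = f2 x - c from rfl, h2 x hx]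
    have congr2 : ∀ x : ℝ, K x * (g2 x - c) = (K x * g2 x - f x) + f x - c * K x := by
      intro x; ring
    have hcKInt : IntervalIntegrable (fun x => c * K x) MeasureTheory.volume a b :=
      (continuous_const.mul hKc).intervalIntegrable a b
    have split : ∫ x in a..b, (K x * (g2 x - c))
        = (∫ x in a..b, (K x * g2 x - f x)) + (∫ x in a..b, f x) - ∫ x in a..b, c * K x := by
      rw [← integral_add hKg2fInt hfInt, ← integral_sub (hKg2fInt.add hfInt) hcKInt]
      exact integral_congr fun x _ => congr2 x
    have hcK0 : ∫ x in a..b, c * K x = 0 := by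
      rw [integral_const_mul, hKint0, mul_zero]
    rw [congr1, split, key, hcK0, hGdef]
    simp only []
    linear_combination (f1 a) * hKa - (f1 b) * hKb + ((f a - f b) / 2) * hpqsum
  -- continuity and sup bounds for Δ
  have hΔc : ContinuousOn Δ (Set.Icc a b) := hf2c.sub continuousOn_const
  have hΔabs : ContinuousOn (fun x => |Δ x|) (Set.Icc a b) := hΔc.abs
  have hcprimeΔ : IsCompact ((fun x => |Δ x|) '' Set.Icc a b) :=
    isCompact_Icc.image_of_continuousOn hΔabs
  have hΔle : ∀ x ∈ Set.Icc a b, |Δ x| ≤ normΔ := fun x hx =>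
    le_csSup hcprimeΔ.bddAbove ⟨x, hx, rfl⟩
  have hnormΔ0 : 0 ≤ normΔ := le_trans (abs_nonneg _) (hΔle a ⟨le_rfl, hab'⟩)
  -- compute ∫ |K|
  have hKabsInt : ∀ u v : ℝ, IntervalIntegrable (fun x => |K x|) MeasureTheory.volume u v :=
    fun u v => (hKc.abs).intervalIntegrable u v
  have hIap : ∫ x in a..p, |K x| = A p - A a := by
    rw [← hKint a p]
    apply integral_congr
    intro x hx
    rw [Set.uIcc_of_le hap.le] at hx
    have h1 : x ≤ p := hx.2
    have h2 : x ≤ q := h1.trans hpq.le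
    exact abs_of_nonneg (by show 0 ≤ (x - p) * (x - q) / 2; clear_value p q s3; nlinarith [mul_nonneg (by linarith : (0:ℝ) ≤ p - x) (by linarith : (0:ℝ) ≤ q - x)])
  have hIpq : ∫ x in p..q, |K x| = -(A q - A p) := by
    rw [← hKint p q, ← integral_neg]
    apply integral_congr
    intro x hx
    rw [Set.uIcc_of_le hpq.le] at hx
    exact abs_of_nonpos (by show (x - p) * (x - q) / 2 ≤ 0; clear_value p q s3; nlinarith [mul_nonneg (by linarith [hx.1] : (0:ℝ) ≤ x - p) (by linarith [hx.2] : (0:ℝ) ≤ q - x)])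
  have hIqb : ∫ x in q..b, |K x| = A b - A q := by
    rw [← hKint q b]
    apply integral_congr
    intro x hx
    rw [Set.uIcc_of_le hqb.le] at hx
    have h1 : p ≤ x := hpq.le.trans hx.1
    exact abs_of_nonneg (by show 0 ≤ (x - p) * (x - q) / 2; clear_value p q s3; nlinarith [mul_nonneg (by linarith [h1] : (0:ℝ) ≤ x - p) (by linarith [hx.1] : (0:ℝ) ≤ x - q)])
  have hKabsTot : ∫ x in a..b, |K x| = s3 * (b - a) ^ 3 / 54 := by
    have s1 := integral_add_adjacent_intervals (hKabsInt a p) (hKabsInt p q)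
    have s2 := integral_add_adjacent_intervals (hKabsInt a q) (hKabsInt q b)
    have : ∫ x in a..b, |K x| = 2 * A p - 2 * A q + A b - A a := by
      rw [← s2, ← s1, hIap, hIpq, hIqb]; ring
    rw [this, hAdef, hpdef, hqdef]
    linear_combination ((b - a) ^ 3 * (4 * s3 - 9) / 648) * h3
  -- main bound
  constructor
  · rw [h1a, h1b, hE2]
    have step1 : |∫ x in a..b, K x * Δ x| ≤ ∫ x in a..b, |K x * Δ x| :=
      abs_integral_le_integral_abs hab'
    have int1 : IntervalIntegrable (fun x => |K x * Δ x|) MeasureTheory.volume a b := by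
      apply ContinuousOn.intervalIntegrable
      rw [Set.uIcc_of_le hab']
      exact (hKc.continuousOn.mul hΔc).abs
    have int2 : IntervalIntegrable (fun x => |K x| * normΔ) MeasureTheory.volume a b :=
      ((hKc.abs).mul continuous_const).intervalIntegrable a b
    have step2 : (∫ x in a..b, |K x * Δ x|) ≤ ∫ x in a..b, |K x| * normΔ := by
      apply integral_mono_on hab' int1 int2
      intro x hx
      rw [abs_mul]
      exact mul_le_mul_of_nonneg_left (hΔle x hx) (abs_nonneg _)
    have step3 : (∫ x in a..b, |K x| * normΔ) = normΔ * (s3 * (b - a) ^ 3 / 54) := by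
      rw [integral_mul_const, hKabsTot]; ring
    calc |∫ x in a..b, K x * Δ x| ≤ ∫ x in a..b, |K x| * normΔ := step1.trans step2
      _ = normΔ * (s3 * (b - a) ^ 3 / 54) := step3
      _ = normΔ * s3 * (b - a) ^ 3 / 54 := by ring
  · -- second part : normΔ ≤ sSup (|f2| '' Icc)
    have hSc : IsCompact (f2 '' Set.Icc a b) := isCompact_Icc.image_of_continuousOn hf2c
    have hNc : IsCompact ((fun x => |f2 x|) '' Set.Icc a b) :=
      isCompact_Icc.image_of_continuousOn hf2c.abs
    set M : ℝ := sSup (f2 '' Set.Icc a b) with hMdef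
    set m : ℝ := sInf (f2 '' Set.Icc a b) with hmdef
    set N : ℝ := sSup ((fun x => |f2 x|) '' Set.Icc a b) with hNdef
    have hle : ∀ x ∈ Set.Icc a b, f2 x ≤ M := fun x hx => le_csSup hSc.bddAbove ⟨x, hx, rfl⟩
    have hge : ∀ x ∈ Set.Icc a b, m ≤ f2 x := fun x hx => csInf_le hSc.bddBelow ⟨x, hx, rfl⟩
    have hNle : ∀ x ∈ Set.Icc a b, |f2 x| ≤ N := fun x hx => le_csSup hNc.bddAbove ⟨x, hx, rfl⟩
    have hMN : M ≤ N := by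
      apply csSup_le (hne.image f2)
      rintro y ⟨x, hx, rfl⟩
      exact (le_abs_self _).trans (hNle x hx)
    have hmN : -N ≤ m := by
      apply le_csInf (hne.image f2)
      rintro y ⟨x, hx, rfl⟩
      have := hNle x hx
      have := neg_abs_le (f2 x)
      linarith
    apply csSup_le (hne.image _)
    rintro y ⟨x, hx, rfl⟩
    show |f2 x - c| ≤ N
    have hcval : c = (m + M) / 2 := rfl
    rw [abs_le]
    constructor
    · have := hge x hx; rw [hcval]; linarith
    · have := hle x hx; rw [hcval]; linarith
end
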